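/- Let (S, μ) be a measure space with μ a finite measure, 0 < ε ≤ 1/e², and let f : S → ℝ≥0 be a probability density with respect to μ. Let A = {s ∈ S : f(s) ≤ √ε}. Then |∫_A f(s) log f(s) dμ(s)| ≤ (μ(S)/2)·√ε·log(1/ε). -/

import Mathlib

open MeasureTheory

lemma mul_log_anti_aux {x y : ℝ} (hx : 0 ≤ x) (hxy : x ≤ y) (hy : y ≤ Real.exp (-1)) :
    y * Real.log y ≤ x * Real.log x := by
  have hanti : AntitoneOn (fun t : ℝ => t * Real.log t) (Set.Icc 0 (Real.exp (-1))) := by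
    have : ∀ t ∈ interior (Set.Icc (0:ℝ) (Real.exp (-1))),
        deriv (fun t : ℝ => t * Real.log t) t < 0 := by
      intro t ht
      rw [interior_Icc] at ht
      rw [Real.deriv_mul_log (ne_of_gt ht.1)]
      have : Real.log t < Real.log (Real.exp (-1)) :=
        Real.log_lt_log ht.1 ht.2
      rw [Real.log_exp] at this
      linarith
    exact StrictAntiOn.antitoneOn <| strictAntiOn_of_deriv_neg (convex_Icc _ _)
      (Real.continuous_mul_log.continuousOn) this
  exact hanti ⟨hx, hxy.trans hy⟩ ⟨hx.trans hxy, hy⟩ hxy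

/-- If `f` is a probability density w.r.t. a finite measure `μ` and `0 < ε ≤ 1/e²`, then
on the set `A = {s : f s ≤ √ε}` we have `|∫_A f log f dμ| ≤ (μ(S)/2) √ε log(1/ε)`. -/
theorem small_density_log_integral_bound {S : Type*} [MeasurableSpace S]
    (μ : Measure S) [IsFiniteMeasure μ]
    (ε : ℝ) (hε0 : 0 < ε) (hε : ε ≤ 1 / Real.exp 2)
    (f : S → ℝ) (hf0 : ∀ s, 0 ≤ f s) (hfdens : ∫ s, f s ∂μ = 1)
    (hint : IntegrableOn (fun s => f s * Real.log (f s)) {s | f s ≤ Real.sqrt ε} μ) :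
    |∫ s in {s | f s ≤ Real.sqrt ε}, f s * Real.log (f s) ∂μ| ≤
      (μ Set.univ).toReal / 2 * Real.sqrt ε * Real.log (1 / ε) := by
  set A := {s | f s ≤ Real.sqrt ε}
  have hsε : Real.sqrt ε ≤ Real.exp (-1) := by
    have : Real.sqrt ε ≤ Real.sqrt (1 / Real.exp 2) := Real.sqrt_le_sqrt hε
    rwa [show (1 : ℝ) / Real.exp 2 = Real.exp (-1) ^ 2 by
      rw [← Real.exp_nat_mul]; push_cast; rw [one_div, ← Real.exp_neg]; ring_nf,
      Real.sqrt_sq (Real.exp_pos _).le] at this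
  -- the pointwise constant
  set C : ℝ := -(Real.sqrt ε * Real.log (Real.sqrt ε)) with hC
  have hClog : C = Real.sqrt ε / 2 * Real.log (1 / ε) := by
    rw [hC, Real.log_sqrt hε0.le, Real.log_div one_ne_zero (ne_of_gt hε0), Real.log_one]
    ring
  have hbound : ∀ s ∈ A, ‖f s * Real.log (f s)‖ ≤ C := by
    intro s hs
    have h1 : f s * Real.log (f s) ≤ 0 :=
      Real.mul_log_nonpos (hf0 s) (le_trans hs (hsε.trans (by
        rw [← Real.exp_zero]; exact Real.exp_le_exp.2 (by norm_num))))
    rw [Real.norm_eq_abs, abs_of_nonpos h1, hC, neg_le_neg_iff]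
    exact mul_log_anti_aux (hf0 s) hs hsε
  have key : |∫ s in A, f s * Real.log (f s) ∂μ| ≤ C * (μ A).toReal := by
    rw [← Real.norm_eq_abs]
    exact norm_setIntegral_le_of_norm_le_const (measure_lt_top μ A) hbound
  have hC0 : 0 ≤ C := by
    rw [hClog]
    have : 0 ≤ Real.log (1/ε) := Real.log_nonneg (by
      rw [le_div_iff₀ hε0, one_mul]
      calc ε ≤ 1 / Real.exp 2 := hε
        _ ≤ 1 := by rw [div_le_one (Real.exp_pos _)]; exact Real.one_le_exp (by norm_num))
    positivity
  calc |∫ s in A, f s * Real.log (f s) ∂μ| ≤ C * (μ A).toReal := key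
    _ ≤ C * (μ Set.univ).toReal := by
        have := ENNReal.toReal_mono (measure_ne_top μ _) (measure_mono (Set.subset_univ A))
        nlinarith
    _ = (μ Set.univ).toReal / 2 * Real.sqrt ε * Real.log (1 / ε) := by
        rw [hClog]; ring
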